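/- If ν is a probability measure on U(D) that is symmetric (invariant under U ↦ U†), then its moment operator M(ν,t) is Hermitian, and consequently ‖M(ν^{*k}, t) − M(μ_H, t)‖_∞ = ‖M(ν, t) − M(μ_H, t)‖_∞^k exactly, for all k ≥ 1. -/

import Mathlib

open MeasureTheory
noncomputable section

instance {D : ℕ} : MeasurableSpace (Matrix (Fin D) (Fin D) ℂ) := borel _

abbrev UG (D : ℕ) := Matrix.unitaryGroup (Fin D) ℂ

def tpow {D : ℕ} (U : Matrix (Fin D) (Fin D) ℂ) (t : ℕ) :
    Matrix (Fin t → Fin D) (Fin t → Fin D) ℂ :=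
  fun i j => ∏ k, U (i k) (j k)

def momentMatrix {D : ℕ} (ν : Measure (UG D)) (t : ℕ) :
    Matrix ((Fin t → Fin D) × (Fin t → Fin D)) ((Fin t → Fin D) × (Fin t → Fin D)) ℂ :=
  fun p q => ∫ U, tpow (U : Matrix (Fin D) (Fin D) ℂ) t p.1 q.1
      * (starRingEnd ℂ) (tpow (U : Matrix (Fin D) (Fin D) ℂ) t p.2 q.2) ∂ν

def opNorm {n : Type*} [Fintype n] [DecidableEq n] (M : Matrix n n ℂ) : ℝ :=
  ‖Matrix.toEuclideanCLM (𝕜 := ℂ) (n := n) M‖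

def mconv {D : ℕ} (μ ν : Measure (UG D)) : Measure (UG D) :=
  Measure.map (fun p : UG D × UG D => p.1 * p.2) (μ.prod ν)

def convIter {D : ℕ} (ν : Measure (UG D)) : ℕ → Measure (UG D)
  | 0 => ν
  | n+1 => mconv ν (convIter ν n)

namespace StmtAux

variable {D : ℕ}

instance : BorelSpace (Matrix (Fin D) (Fin D) ℂ) := ⟨rfl⟩

/-- the basic integrand -/
def bigT (t : ℕ) (U : Matrix (Fin D) (Fin D) ℂ) :
    Matrix ((Fin t → Fin D) × (Fin t → Fin D)) ((Fin t → Fin D) × (Fin t → Fin D)) ℂ :=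
  fun p q => tpow U t p.1 q.1 * (starRingEnd ℂ) (tpow U t p.2 q.2)

lemma momentMatrix_eq (ν : Measure (UG D)) (t : ℕ) :
    momentMatrix ν t = fun p q => ∫ U, bigT t (U : Matrix (Fin D) (Fin D) ℂ) p q ∂ν := rfl

lemma tpow_mul (U V : Matrix (Fin D) (Fin D) ℂ) (t : ℕ) :
    tpow (U * V) t = tpow U t * tpow V t := by
  funext i j
  simp only [tpow, Matrix.mul_apply]
  rw [Finset.prod_univ_sum]
  rw [Fintype.piFinset_univ]
  exact Finset.sum_congr rfl fun r _ => Finset.prod_mul_distrib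

lemma bigT_mul (t : ℕ) (U V : Matrix (Fin D) (Fin D) ℂ) :
    bigT t (U * V) = bigT t U * bigT t V := by
  funext p q
  simp only [bigT, tpow_mul, Matrix.mul_apply, map_sum, Finset.sum_mul_sum, map_mul]
  rw [Fintype.sum_prod_type]
  exact Finset.sum_congr rfl fun r1 _ => Finset.sum_congr rfl fun r2 _ => by ring

instance : SecondCountableTopology (Matrix (Fin D) (Fin D) ℂ) := by
  exact inferInstanceAs (SecondCountableTopology (Fin D → Fin D → ℂ))

instance : SecondCountableTopology (UG D) :=
  TopologicalSpace.Subtype.secondCountableTopology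
    (Matrix.unitaryGroup (Fin D) ℂ : Set (Matrix (Fin D) (Fin D) ℂ))

instance : BorelSpace (UG D) :=
  Subtype.borelSpace (Matrix.unitaryGroup (Fin D) ℂ : Set (Matrix (Fin D) (Fin D) ℂ))

lemma measurable_entry (i j : Fin D) :
    Measurable fun M : Matrix (Fin D) (Fin D) ℂ => M i j := by
  have h : Continuous fun M : Matrix (Fin D) (Fin D) ℂ => M i j :=
    (continuous_apply j).comp (continuous_apply i)
  exact h.measurable

lemma measurable_tpow (t : ℕ) (i j : Fin t → Fin D) :
    Measurable fun U : UG D => tpow (U : Matrix (Fin D) (Fin D) ℂ) t i j :=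
  Finset.measurable_prod _ fun k _ =>
    (measurable_entry (i k) (j k)).comp measurable_subtype_coe

lemma measurable_bigT (t : ℕ) (p q : (Fin t → Fin D) × (Fin t → Fin D)) :
    Measurable fun U : UG D => bigT t (U : Matrix (Fin D) (Fin D) ℂ) p q := by
  exact (measurable_tpow t p.1 q.1).mul
    (Complex.continuous_conj.measurable.comp (measurable_tpow t p.2 q.2))

lemma norm_tpow_le (t : ℕ) (U : UG D) (i j : Fin t → Fin D) :
    ‖tpow (U : Matrix (Fin D) (Fin D) ℂ) t i j‖ ≤ 1 := by
  rw [tpow, norm_prod]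
  refine Finset.prod_le_one (fun k _ => norm_nonneg _) fun k _ => ?_
  exact entry_norm_bound_of_unitary U.2 _ _

lemma norm_bigT_le (t : ℕ) (U : UG D) (p q : (Fin t → Fin D) × (Fin t → Fin D)) :
    ‖bigT t (U : Matrix (Fin D) (Fin D) ℂ) p q‖ ≤ 1 := by
  rw [bigT, norm_mul, RingHomIsometric.norm_map]
  exact mul_le_one₀ (norm_tpow_le t U _ _) (norm_nonneg _) (norm_tpow_le t U _ _)

lemma integrable_bigT (ν : Measure (UG D)) [IsProbabilityMeasure ν] (t : ℕ)
    (p q : (Fin t → Fin D) × (Fin t → Fin D)) :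
    Integrable (fun U : UG D => bigT t (U : Matrix (Fin D) (Fin D) ℂ) p q) ν :=
  (integrable_const (1:ℝ)).mono' (measurable_bigT t p q).aestronglyMeasurable
    (ae_of_all _ fun U => norm_bigT_le t U p q)

lemma measurable_mul2 : Measurable fun pr : UG D × UG D => pr.1 * pr.2 := by
  have h : Continuous fun pr : UG D × UG D =>
      ((pr.1 : Matrix (Fin D) (Fin D) ℂ) * (pr.2 : Matrix (Fin D) (Fin D) ℂ)) :=
    (continuous_subtype_val.comp continuous_fst).matrix_mul
      (continuous_subtype_val.comp continuous_snd)
  exact Measurable.subtype_mk h.measurable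

lemma measurable_leftmul (g : UG D) : Measurable fun x : UG D => g * x :=
  measurable_mul2.comp (measurable_const.prodMk measurable_id)

lemma measurable_inv2 : Measurable fun U : UG D => U⁻¹ := by
  have h : Continuous fun U : UG D => star (U : Matrix (Fin D) (Fin D) ℂ) :=
    continuous_subtype_val.matrix_conjTranspose
  exact Measurable.subtype_mk h.measurable

lemma int_shift (μH : Measure (UG D)) (hinv : ∀ g : UG D, Measure.map (fun x => g * x) μH = μH)
    (φ : UG D → ℂ) (hφ : Measurable φ) (g : UG D) :
    ∫ x, φ (g * x) ∂μH = ∫ x, φ x ∂μH := by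
  conv_rhs => rw [← hinv g]
  rw [integral_map (measurable_leftmul g).aemeasurable hφ.aestronglyMeasurable]

instance mconv_prob (μ ν : Measure (UG D)) [IsProbabilityMeasure μ] [IsProbabilityMeasure ν] :
    IsProbabilityMeasure (mconv μ ν) :=
  Measure.isProbabilityMeasure_map measurable_mul2.aemeasurable

instance convIter_prob (ν : Measure (UG D)) [IsProbabilityMeasure ν] (n : ℕ) :
    IsProbabilityMeasure (convIter ν n) := by
  induction n with
  | zero => exact ‹_›
  | succ n ih =>
    show IsProbabilityMeasure (mconv ν (convIter ν n))
    exact mconv_prob ν (convIter ν n)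

lemma momentMatrix_mconv (μ ν : Measure (UG D)) [IsProbabilityMeasure μ] [IsProbabilityMeasure ν]
    (t : ℕ) : momentMatrix (mconv μ ν) t = momentMatrix μ t * momentMatrix ν t := by
  funext p q
  have hmeas : ∀ r : (Fin t → Fin D) × (Fin t → Fin D), Measurable fun z : UG D × UG D =>
      bigT t (z.1 : Matrix (Fin D) (Fin D) ℂ) p r * bigT t (z.2 : Matrix (Fin D) (Fin D) ℂ) r q :=
    fun r => ((measurable_bigT t p r).comp measurable_fst).mul
      ((measurable_bigT t r q).comp measurable_snd)
  have hint : ∀ r : (Fin t → Fin D) × (Fin t → Fin D), Integrable (fun z : UG D × UG D =>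
      bigT t (z.1 : Matrix (Fin D) (Fin D) ℂ) p r * bigT t (z.2 : Matrix (Fin D) (Fin D) ℂ) r q)
      (μ.prod ν) := fun r =>
    (integrable_const (1:ℝ)).mono' (hmeas r).aestronglyMeasurable (ae_of_all _ fun z => by
      rw [norm_mul]
      exact mul_le_one₀ (norm_bigT_le t z.1 p r) (norm_nonneg _) (norm_bigT_le t z.2 r q))
  calc momentMatrix (mconv μ ν) t p q
      = ∫ z : UG D × UG D, bigT t ((z.1 * z.2 : UG D) : Matrix (Fin D) (Fin D) ℂ) p q
          ∂(μ.prod ν) :=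
        integral_map measurable_mul2.aemeasurable (measurable_bigT t p q).aestronglyMeasurable
    _ = ∫ z : UG D × UG D, ∑ r : (Fin t → Fin D) × (Fin t → Fin D),
          bigT t (z.1 : Matrix (Fin D) (Fin D) ℂ) p r * bigT t (z.2 : Matrix (Fin D) (Fin D) ℂ) r q
          ∂(μ.prod ν) := by
        refine integral_congr_ae (ae_of_all _ fun z => ?_)
        show bigT t ((z.1 * z.2 : UG D) : Matrix (Fin D) (Fin D) ℂ) p q
          = ∑ r : (Fin t → Fin D) × (Fin t → Fin D),
            bigT t (z.1 : Matrix (Fin D) (Fin D) ℂ) p r * bigT t (z.2 : Matrix (Fin D) (Fin D) ℂ) r q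
        rw [show ((z.1 * z.2 : UG D) : Matrix (Fin D) (Fin D) ℂ)
            = (z.1 : Matrix (Fin D) (Fin D) ℂ) * (z.2 : Matrix (Fin D) (Fin D) ℂ) from rfl,
          bigT_mul, Matrix.mul_apply]
    _ = ∑ r : (Fin t → Fin D) × (Fin t → Fin D), ∫ z : UG D × UG D,
          bigT t (z.1 : Matrix (Fin D) (Fin D) ℂ) p r * bigT t (z.2 : Matrix (Fin D) (Fin D) ℂ) r q
          ∂(μ.prod ν) :=
        integral_finset_sum _ fun r _ => hint r
    _ = ∑ r : (Fin t → Fin D) × (Fin t → Fin D),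
          (∫ u : UG D, bigT t (u : Matrix (Fin D) (Fin D) ℂ) p r ∂μ) *
          (∫ v : UG D, bigT t (v : Matrix (Fin D) (Fin D) ℂ) r q ∂ν) :=
        Finset.sum_congr rfl fun r _ => integral_prod_mul
          (f := fun u : UG D => bigT t (u : Matrix (Fin D) (Fin D) ℂ) p r)
          (g := fun v : UG D => bigT t (v : Matrix (Fin D) (Fin D) ℂ) r q)
    _ = (momentMatrix μ t * momentMatrix ν t) p q := by
        rw [Matrix.mul_apply]; rfl

lemma momentMatrix_convIter (ν : Measure (UG D)) [IsProbabilityMeasure ν] (t n : ℕ) :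
    momentMatrix (convIter ν n) t = (momentMatrix ν t) ^ (n + 1) := by
  induction n with
  | zero => rw [pow_one]; rfl
  | succ n ih =>
    show momentMatrix (mconv ν (convIter ν n)) t = _
    haveI := convIter_prob ν n
    rw [momentMatrix_mconv, ih, ← pow_succ']

lemma momentMatrix_mconv_haar (ρ μH : Measure (UG D)) [IsProbabilityMeasure ρ]
    [IsProbabilityMeasure μH]
    (hinv : ∀ g : UG D, Measure.map (fun x => g * x) μH = μH) (t : ℕ) :
    momentMatrix (mconv ρ μH) t = momentMatrix μH t := by
  funext p q
  have hint : Integrable (fun z : UG D × UG D =>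
      bigT t ((z.1 * z.2 : UG D) : Matrix (Fin D) (Fin D) ℂ) p q) (ρ.prod μH) :=
    (integrable_const (1:ℝ)).mono'
      ((measurable_bigT t p q).comp measurable_mul2).aestronglyMeasurable
      (ae_of_all _ fun z => norm_bigT_le t _ p q)
  calc momentMatrix (mconv ρ μH) t p q
      = ∫ z : UG D × UG D, bigT t ((z.1 * z.2 : UG D) : Matrix (Fin D) (Fin D) ℂ) p q
          ∂(ρ.prod μH) :=
        integral_map measurable_mul2.aemeasurable (measurable_bigT t p q).aestronglyMeasurable
    _ = ∫ u : UG D, ∫ v : UG D, bigT t ((u * v : UG D) : Matrix (Fin D) (Fin D) ℂ) p q ∂μH ∂ρ :=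
        integral_prod _ hint
    _ = ∫ _u : UG D, ∫ v : UG D, bigT t (v : Matrix (Fin D) (Fin D) ℂ) p q ∂μH ∂ρ :=
        integral_congr_ae (ae_of_all _ fun u =>
          int_shift μH hinv (fun v : UG D => bigT t (v : Matrix (Fin D) (Fin D) ℂ) p q)
            (measurable_bigT t p q) u)
    _ = momentMatrix μH t p q := by
        rw [integral_const, probReal_univ, one_smul]
        rfl

lemma measurable_inv_mul (g : UG D) : Measurable fun u : UG D => u⁻¹ * g := by
  have h : Continuous fun u : UG D =>
      (star (u : Matrix (Fin D) (Fin D) ℂ)) * (g : Matrix (Fin D) (Fin D) ℂ) :=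
    (continuous_subtype_val.matrix_conjTranspose).matrix_mul continuous_const
  exact Measurable.subtype_mk h.measurable

lemma measurable_inv_mul2 : Measurable fun z : UG D × UG D => z.1⁻¹ * z.2 := by
  have h : Continuous fun z : UG D × UG D =>
      (star (z.1 : Matrix (Fin D) (Fin D) ℂ)) * (z.2 : Matrix (Fin D) (Fin D) ℂ) :=
    ((continuous_subtype_val.comp continuous_fst).matrix_conjTranspose).matrix_mul
      (continuous_subtype_val.comp continuous_snd)
  exact Measurable.subtype_mk h.measurable

lemma int_inv_haar (μH : Measure (UG D)) [IsProbabilityMeasure μH]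
    (hinv : ∀ g : UG D, Measure.map (fun x => g * x) μH = μH)
    (φ : UG D → ℂ) (hφ : Measurable φ) (hb : ∀ U : UG D, ‖φ U‖ ≤ 1) :
    ∫ u : UG D, φ u⁻¹ ∂μH = ∫ u : UG D, φ u ∂μH := by
  have stepA : ∀ g : UG D, ∫ u : UG D, φ (u⁻¹ * g) ∂μH = ∫ u : UG D, φ u⁻¹ ∂μH := by
    intro g
    have e : ∀ x : UG D, (g * x)⁻¹ * g = x⁻¹ := fun x => by group
    calc ∫ u : UG D, φ (u⁻¹ * g) ∂μH
        = ∫ x : UG D, φ ((g * x)⁻¹ * g) ∂μH :=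
          (int_shift μH hinv (fun u => φ (u⁻¹ * g))
            (hφ.comp (measurable_inv_mul g)) g).symm
      _ = ∫ x : UG D, φ x⁻¹ ∂μH :=
          integral_congr_ae (ae_of_all _ fun x => congrArg φ (e x))
  have hintprod : Integrable (Function.uncurry fun u v : UG D => φ (u⁻¹ * v)) (μH.prod μH) :=
    (integrable_const (1:ℝ)).mono'
      ((hφ.comp measurable_inv_mul2).aestronglyMeasurable)
      (ae_of_all _ fun z => hb _)
  have h1 : ∫ v : UG D, ∫ u : UG D, φ (u⁻¹ * v) ∂μH ∂μH = ∫ u : UG D, φ u⁻¹ ∂μH := by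
    rw [integral_congr_ae (ae_of_all _ fun v => stepA v), integral_const]
    simp
  have h2 : ∫ u : UG D, ∫ v : UG D, φ (u⁻¹ * v) ∂μH ∂μH = ∫ v : UG D, φ v ∂μH := by
    rw [integral_congr_ae (ae_of_all _ fun u : UG D => int_shift μH hinv φ hφ u⁻¹),
      integral_const]
    simp
  rw [← h1, ← integral_integral_swap hintprod, h2]

lemma tpow_star (U : Matrix (Fin D) (Fin D) ℂ) (t : ℕ) (i j : Fin t → Fin D) :
    tpow (star U) t i j = (starRingEnd ℂ) (tpow U t j i) := by
  simp only [tpow, map_prod, Matrix.star_apply, Complex.star_def]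

lemma bigT_star (t : ℕ) (U : Matrix (Fin D) (Fin D) ℂ)
    (p q : (Fin t → Fin D) × (Fin t → Fin D)) :
    bigT t (star U) q p = (starRingEnd ℂ) (bigT t U p q) := by
  simp only [bigT, tpow_star, map_mul, Complex.conj_conj]

lemma momentMatrix_isHermitian_of (ρ : Measure (UG D)) [IsProbabilityMeasure ρ] (t : ℕ)
    (h : ∀ p q : (Fin t → Fin D) × (Fin t → Fin D),
      (∫ U : UG D, bigT t ((U⁻¹ : UG D) : Matrix (Fin D) (Fin D) ℂ) p q ∂ρ)
        = ∫ U : UG D, bigT t (U : Matrix (Fin D) (Fin D) ℂ) p q ∂ρ) :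
    (momentMatrix ρ t).IsHermitian := by
  have e : ∀ (p q : (Fin t → Fin D) × (Fin t → Fin D)) (U : UG D),
      (starRingEnd ℂ) (bigT t (U : Matrix (Fin D) (Fin D) ℂ) q p)
        = bigT t ((U⁻¹ : UG D) : Matrix (Fin D) (Fin D) ℂ) p q := by
    intro p q U
    rw [show ((U⁻¹ : UG D) : Matrix (Fin D) (Fin D) ℂ) = star (U : Matrix (Fin D) (Fin D) ℂ)
      from rfl, bigT_star]
  show (momentMatrix ρ t).conjTranspose = momentMatrix ρ t
  funext p q
  rw [Matrix.conjTranspose_apply]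
  have key : (starRingEnd ℂ) (∫ U : UG D, bigT t (U : Matrix (Fin D) (Fin D) ℂ) q p ∂ρ)
      = ∫ U : UG D, bigT t (U : Matrix (Fin D) (Fin D) ℂ) p q ∂ρ := by
    rw [← integral_conj, integral_congr_ae (ae_of_all _ (e p q)), h p q]
  exact key

lemma pow_sub_proj {n : Type*} [Fintype n] [DecidableEq n] (A P : Matrix n n ℂ)
    (hAP : A * P = P) (hPA : P * A = P) (hPP : P * P = P) :
    ∀ k : ℕ, 1 ≤ k → (A - P) ^ k = A ^ k - P := by
  have hAkP : ∀ k : ℕ, A ^ k * P = P := by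
    intro k; induction k with
    | zero => simp
    | succ k ih => rw [pow_succ, mul_assoc, hAP, ih]
  refine Nat.le_induction ?_ ?_
  · simp
  · intro k hk ih
    rw [pow_succ, ih, pow_succ, sub_mul, mul_sub, mul_sub, hAkP, hPA, hPP]
    abel

lemma norm_pow_of_selfAdjoint {E : Type*} [NormedRing E] [StarRing E] [CStarRing E]
    {a : E} (ha : IsSelfAdjoint a) : ∀ k : ℕ, 1 ≤ k → ‖a ^ k‖ = ‖a‖ ^ k := by
  intro k hk
  have key : ‖a ^ k‖₊ = ‖a‖₊ ^ k := by
    refine le_antisymm (nnnorm_pow_le' a hk) ?_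
    rcases eq_or_ne (‖a‖₊) 0 with h0 | h0
    · have ha0 : a = 0 := nnnorm_eq_zero.mp h0
      simp [ha0, zero_pow (Nat.one_le_iff_ne_zero.mp hk), h0]
    · have hk2 : k < 2 ^ k := Nat.lt_two_pow_self
      have hsplit : a ^ (2 ^ k) = a ^ k * a ^ (2 ^ k - k) := by
        rw [← pow_add, Nat.add_sub_cancel' (le_of_lt hk2)]
      have hb : ‖a‖₊ ^ (2 ^ k) ≤ ‖a ^ k‖₊ * ‖a‖₊ ^ (2 ^ k - k) := by
        calc ‖a‖₊ ^ (2 ^ k) = ‖a ^ (2 ^ k)‖₊ := (ha.nnnorm_pow_two_pow k).symm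
          _ = ‖a ^ k * a ^ (2 ^ k - k)‖₊ := by rw [hsplit]
          _ ≤ ‖a ^ k‖₊ * ‖a ^ (2 ^ k - k)‖₊ := nnnorm_mul_le _ _
          _ ≤ ‖a ^ k‖₊ * ‖a‖₊ ^ (2 ^ k - k) :=
              mul_le_mul_right (nnnorm_pow_le' a (by omega)) _
      have hle : ‖a‖₊ ^ k * ‖a‖₊ ^ (2 ^ k - k) ≤ ‖a ^ k‖₊ * ‖a‖₊ ^ (2 ^ k - k) := by
        rw [← pow_add, Nat.add_sub_cancel' (le_of_lt hk2)]; exact hb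
      exact le_of_mul_le_mul_right hle (pow_pos (pos_iff_ne_zero.mpr h0) _)
  calc ‖a ^ k‖ = ((‖a ^ k‖₊ : NNReal) : ℝ) := rfl
    _ = ((‖a‖₊ ^ k : NNReal) : ℝ) := by rw [key]
    _ = ‖a‖ ^ k := by push_cast; rfl

end StmtAux

theorem stmt1 {D : ℕ} (t : ℕ) (ν μH : Measure (UG D))
    [IsProbabilityMeasure ν] [IsProbabilityMeasure μH]
    (hinv : ∀ g : UG D, Measure.map (fun x => g * x) μH = μH)
    (hsym : Measure.map (fun U : UG D => U⁻¹) ν = ν) :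
    (momentMatrix ν t).IsHermitian ∧
    ∀ k : ℕ, 1 ≤ k →
      opNorm (momentMatrix (convIter ν (k-1)) t - momentMatrix μH t) =
        (opNorm (momentMatrix ν t - momentMatrix μH t)) ^ k := by
  have hHermA : (momentMatrix ν t).IsHermitian := by
    refine StmtAux.momentMatrix_isHermitian_of ν t fun p q => ?_
    conv_rhs => rw [← hsym]
    rw [integral_map StmtAux.measurable_inv2.aemeasurable
      (StmtAux.measurable_bigT t p q).aestronglyMeasurable]
  have hHermP : (momentMatrix μH t).IsHermitian :=
    StmtAux.momentMatrix_isHermitian_of μH t fun p q =>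
      StmtAux.int_inv_haar μH hinv _ (StmtAux.measurable_bigT t p q)
        (fun U => StmtAux.norm_bigT_le t U p q)
  have hAP : momentMatrix ν t * momentMatrix μH t = momentMatrix μH t := by
    rw [← StmtAux.momentMatrix_mconv]
    exact StmtAux.momentMatrix_mconv_haar ν μH hinv t
  have hPP : momentMatrix μH t * momentMatrix μH t = momentMatrix μH t := by
    rw [← StmtAux.momentMatrix_mconv]
    exact StmtAux.momentMatrix_mconv_haar μH μH hinv t
  have hPA : momentMatrix μH t * momentMatrix ν t = momentMatrix μH t := by
    have h := congrArg Matrix.conjTranspose hAP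
    rwa [Matrix.conjTranspose_mul, hHermA, hHermP] at h
  refine ⟨hHermA, fun k hk => ?_⟩
  have hconv : momentMatrix (convIter ν (k-1)) t = (momentMatrix ν t) ^ k := by
    rw [StmtAux.momentMatrix_convIter ν t (k-1), Nat.sub_add_cancel hk]
  rw [hconv, ← StmtAux.pow_sub_proj (momentMatrix ν t) (momentMatrix μH t) hAP hPA hPP k hk]
  have hABherm : (momentMatrix ν t - momentMatrix μH t).IsHermitian := hHermA.sub hHermP
  have hsa : IsSelfAdjoint ((Matrix.toEuclideanCLM (𝕜 := ℂ))
      (momentMatrix ν t - momentMatrix μH t)) := by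
    show star ((Matrix.toEuclideanCLM (𝕜 := ℂ)) (momentMatrix ν t - momentMatrix μH t)) = _
    rw [← map_star, Matrix.star_eq_conjTranspose, hABherm]
  rw [opNorm, opNorm, map_pow]
  exact StmtAux.norm_pow_of_selfAdjoint hsa k hk
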